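/- A standard interference mapping T : ℝ₊^K → ℝ₊₊^K has at most one fixed point; i.e., if T(p) = p and T(q) = q for p, q ∈ ℝ₊^K, then p = q. -/
import Mathlib


/-- `f` is a standard interference function on `ℝ₊^K`: strictly positive on the
nonnegative orthant, monotone w.r.t. the coordinatewise order, and scalable. -/
def IsStdIF {K : ℕ} (f : (Fin K → ℝ) → ℝ) : Prop :=
  (∀ p : Fin K → ℝ, (∀ i, 0 ≤ p i) → 0 < f p) ∧
  (∀ p q : Fin K → ℝ, (∀ i, 0 ≤ q i) → (∀ i, q i ≤ p i) → f q ≤ f p) ∧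
  (∀ p : Fin K → ℝ, (∀ i, 0 ≤ p i) → ∀ α : ℝ, 1 < α → f (α • p) < α * f p)

lemma stdIF_aux {K : ℕ} (T : (Fin K → ℝ) → (Fin K → ℝ))
    (hT : ∀ k : Fin K, IsStdIF (fun p => T p k))
    (p q : Fin K → ℝ) (hp : ∀ i, 0 ≤ p i) (hq : ∀ i, 0 ≤ q i)
    (hfp : T p = p) (hfq : T q = q) : ∀ i, q i ≤ p i := by
  intro i
  have hppos : ∀ k, 0 < p k := fun k => by
    have h0 : 0 < T p k := (hT k).1 p hp
    rwa [congrFun hfp k] at h0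
  by_contra h
  push_neg at h
  have hne : (Finset.univ : Finset (Fin K)).Nonempty := ⟨i, Finset.mem_univ i⟩
  set α := Finset.univ.sup' hne (fun k => q k / p k) with hα
  have hα1 : 1 < α := by
    have h1 : 1 < q i / p i := (one_lt_div (hppos i)).2 h
    exact lt_of_lt_of_le h1 (Finset.le_sup' (fun k => q k / p k) (Finset.mem_univ i))
  have hle : ∀ k, q k ≤ α * p k := fun k => by
    have := Finset.le_sup' (fun k => q k / p k) (Finset.mem_univ k)
    calc q k = q k / p k * p k := (div_mul_cancel₀ _ (hppos k).ne').symm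
    _ ≤ α * p k := mul_le_mul_of_nonneg_right this (hppos k).le
  obtain ⟨j, -, hj⟩ := Finset.exists_mem_eq_sup' hne (fun k => q k / p k)
  have hqj : q j = α * p j := by
    rw [hα, hj]
    exact (div_mul_cancel₀ _ (hppos j).ne').symm
  have hm := (hT j).2.1 (α • p) q hq (fun k => by simpa using hle k)
  have hs := (hT j).2.2 p hp α hα1
  have : q j < α * p j := by
    calc q j = T q j := (congrFun hfq j).symm
    _ ≤ T (α • p) j := hm
    _ < α * T p j := hs
    _ = α * p j := by rw [congrFun hfp j]
  exact absurd hqj (ne_of_lt this)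

theorem stmt6 {K : ℕ} (T : (Fin K → ℝ) → (Fin K → ℝ))
    (hT : ∀ k : Fin K, IsStdIF (fun p => T p k))
    (p q : Fin K → ℝ) (hp : ∀ i, 0 ≤ p i) (hq : ∀ i, 0 ≤ q i)
    (hfp : T p = p) (hfq : T q = q) : p = q := by
  funext i
  exact le_antisymm (stdIF_aux T hT q p hq hp hfq hfp i)
    (stdIF_aux T hT p q hp hq hfp hfq i)
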